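/- Let a finite group G act on finite sets X, Y, with m₁ = |X/G|, n₁ = |Y/G|, m₁₂ = |(X×Y)/G| (for the diagonal action). Then the number of maximal G-good subsets of X × Y is at most C(m₁₂, m₁ + n₁ - 1). -/

import Mathlib

def IsGGood (G : Type*) {X Y : Type*} [Group G] [MulAction G X] [MulAction G Y]
    (S : Set (X × Y)) : Prop :=
  (∀ (g : G), ∀ p ∈ S, g • p ∈ S) ∧
  ∀ f : X × Y → ℝ, (∀ (g : G), ∀ p ∈ S, f (g • p) = f p) →
    ∃ u : X → ℝ, ∃ v : Y → ℝ,
      (∀ (g : G) (x : X), u (g • x) = u x) ∧ (∀ (g : G) (y : Y), v (g • y) = v y) ∧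
      ∀ p ∈ S, f p = u p.1 + v p.2

open MulAction Module Set

section AuxLA

lemma exists_eval_of_li {V : Type*} [AddCommGroup V] [Module ℝ V] [FiniteDimensional ℝ V]
    {ι : Type*} [Fintype ι] {L : ι → Module.Dual ℝ V} (h : LinearIndependent ℝ L)
    (c : ι → ℝ) : ∃ x : V, ∀ i, L i x = c i := by
  classical
  let Φ : V →ₗ[ℝ] (ι → ℝ) := LinearMap.pi L
  have hsub : Submodule.span ℝ (Set.range L) ≤ LinearMap.range Φ.dualMap := by
    rw [Submodule.span_le]
    rintro - ⟨i, rfl⟩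
    exact ⟨LinearMap.proj i, by ext v; simp [Φ]⟩
  have h1 : Fintype.card ι ≤ finrank ℝ (LinearMap.range Φ) := by
    rw [← Φ.finrank_range_dualMap_eq_finrank_range, ← finrank_span_eq_card h]
    exact Submodule.finrank_mono hsub
  have h2 : LinearMap.range Φ = ⊤ := by
    apply Submodule.eq_top_of_finrank_eq
    have := Submodule.finrank_le (LinearMap.range Φ)
    simp only [finrank_pi ℝ] at *
    omega
  obtain ⟨x, hx⟩ := LinearMap.range_eq_top.mp h2 c
  exact ⟨x, fun i => congrFun hx i⟩

end AuxLA

section Orbits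

variable (G : Type*) {X Y : Type*} [Group G] [MulAction G X] [MulAction G Y]

/-- The map from orbits of `X × Y` to pairs of orbits. -/
def orbPair : Quotient (orbitRel G (X × Y)) →
    Quotient (orbitRel G X) × Quotient (orbitRel G Y) :=
  Quotient.lift (fun p => (Quotient.mk (orbitRel G X) p.1, Quotient.mk (orbitRel G Y) p.2))
    (by
      rintro p q h
      obtain ⟨g, rfl⟩ := MulAction.mem_orbit_iff.mp (MulAction.orbitRel_apply.mp h)
      exact Prod.ext (Quotient.sound (mem_orbit _ g)) (Quotient.sound (mem_orbit _ g)))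

@[simp] lemma orbPair_mk (p : X × Y) :
    orbPair G (Quotient.mk (orbitRel G (X × Y)) p) =
      (Quotient.mk (orbitRel G X) p.1, Quotient.mk (orbitRel G Y) p.2) := rfl

/-- The functional associated to a pair of orbits. -/
def dfun (a : Quotient (orbitRel G X)) (b : Quotient (orbitRel G Y)) :
    Module.Dual ℝ ((Quotient (orbitRel G X) → ℝ) × (Quotient (orbitRel G Y) → ℝ)) where
  toFun := fun w => w.1 a + w.2 b
  map_add' := by intros; simp [Prod.fst_add]; ring
  map_smul' := by intros; simp [Prod.smul_fst]; ring

@[simp] lemma dfun_apply (a : Quotient (orbitRel G X)) (b : Quotient (orbitRel G Y))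
    (w : (Quotient (orbitRel G X) → ℝ) × (Quotient (orbitRel G Y) → ℝ)) :
    dfun G a b w = w.1 a + w.2 b := rfl

/-- The functional associated to an orbit of `X × Y`. -/
def lfun (q : Quotient (orbitRel G (X × Y))) :
    Module.Dual ℝ ((Quotient (orbitRel G X) → ℝ) × (Quotient (orbitRel G Y) → ℝ)) :=
  dfun G (orbPair G q).1 (orbPair G q).2

@[simp] lemma lfun_apply (q : Quotient (orbitRel G (X × Y)))
    (w : (Quotient (orbitRel G X) → ℝ) × (Quotient (orbitRel G Y) → ℝ)) :
    lfun G q w = w.1 (orbPair G q).1 + w.2 (orbPair G q).2 := rfl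

end Orbits

section Main

variable {G X Y : Type*} [Group G] [Finite G] [Finite X] [Finite Y]
  [MulAction G X] [MulAction G Y]

lemma invariant_eq_preimage {S : Set (X × Y)} (hS : ∀ (g : G), ∀ p ∈ S, g • p ∈ S) :
    S = {p | Quotient.mk (orbitRel G (X × Y)) p ∈ Quotient.mk (orbitRel G (X × Y)) '' S} := by
  ext p
  constructor
  · intro hp; exact ⟨p, hp, rfl⟩
  · rintro ⟨p', hp', hpq⟩
    obtain ⟨g, rfl⟩ := MulAction.mem_orbit_iff.mp (Quotient.eq''.mp hpq.symm)
    exact hS g p' hp'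

lemma good_li {S : Set (X × Y)} (hG : IsGGood G S) :
    LinearIndependent ℝ
      (fun q : (Quotient.mk (orbitRel G (X × Y)) '' S : Set _) => lfun G q.1) := by
  classical
  set T := (Quotient.mk (orbitRel G (X × Y)) '' S : Set _) with hT
  have : Fintype ↥T := Fintype.ofFinite _
  rw [Fintype.linearIndependent_iff]
  intro c hc
  -- define the invariant function given by c
  set f : X × Y → ℝ := fun p => if h : Quotient.mk (orbitRel G (X × Y)) p ∈ T then c ⟨_, h⟩ else 0
    with hf
  have finv : ∀ (g : G), ∀ p ∈ S, f (g • p) = f p := by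
    intro g p _
    have : Quotient.mk (orbitRel G (X × Y)) (g • p) = Quotient.mk (orbitRel G (X × Y)) p :=
      Quotient.sound (mem_orbit p g)
    simp [hf, this]
  obtain ⟨u, v, hu, hv, huv⟩ := hG.2 f finv
  -- descend u and v to the quotients
  set ub : Quotient (orbitRel G X) → ℝ := Quotient.lift u (by
    rintro x y h
    obtain ⟨g, rfl⟩ := MulAction.mem_orbit_iff.mp (MulAction.orbitRel_apply.mp h)
    exact hu g y) with hub
  set vb : Quotient (orbitRel G Y) → ℝ := Quotient.lift v (by
    rintro x y h
    obtain ⟨g, rfl⟩ := MulAction.mem_orbit_iff.mp (MulAction.orbitRel_apply.mp h)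
    exact hv g y) with hvb
  have key : ∀ i : T, lfun G i.1 (ub, vb) = c i := by
    rintro ⟨q, hq⟩
    obtain ⟨p, hp, rfl⟩ := hq
    have : f p = c ⟨_, ⟨p, hp, rfl⟩⟩ := by
      rw [hf]; simp only [dif_pos (show _ ∈ T from ⟨p, hp, rfl⟩)]
    simp only [lfun_apply, orbPair_mk]
    show u p.1 + v p.2 = _
    rw [← huv p hp, this]
  intro i
  have := congrArg (fun L : Module.Dual ℝ _ => L (ub, vb)) hc
  simp only [LinearMap.coe_sum, Finset.sum_apply, LinearMap.smul_apply, smul_eq_mul,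
    LinearMap.zero_apply] at this
  rw [Finset.sum_congr rfl (fun j _ => by rw [key j])] at this
  have hsq : ∑ j : T, c j * c j = 0 := this
  have : ∀ j : T, c j * c j = 0 → c j = 0 := fun j h => by nlinarith [sq_nonneg (c j)]
  have := Finset.sum_eq_zero_iff_of_nonneg (fun j _ => mul_self_nonneg (c j)) |>.mp hsq
  exact mul_self_eq_zero.mp (this i (Finset.mem_univ i))


lemma li_good {S : Set (X × Y)} (hinv : ∀ (g : G), ∀ p ∈ S, g • p ∈ S)
    (hli : LinearIndependent ℝ
      (fun q : (Quotient.mk (orbitRel G (X × Y)) '' S : Set _) => lfun G q.1)) :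
    IsGGood G S := by
  classical
  refine ⟨hinv, fun f hf => ?_⟩
  set T := (Quotient.mk (orbitRel G (X × Y)) '' S : Set _) with hT
  have : Fintype ↥T := Fintype.ofFinite _
  have hrep : ∀ i : T, ∃ p, p ∈ S ∧ Quotient.mk (orbitRel G (X × Y)) p = i.1 := fun i => i.2
  have hwd : ∀ (i : T), ∀ p ∈ S, Quotient.mk (orbitRel G (X × Y)) p = i.1 →
      f p = f (hrep i).choose := by
    rintro i p hp hq
    have hspec := (hrep i).choose_spec
    have : Quotient.mk (orbitRel G (X × Y)) p
        = Quotient.mk (orbitRel G (X × Y)) (hrep i).choose := by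
      rw [hq, hspec.2]
    obtain ⟨g, rfl⟩ := MulAction.mem_orbit_iff.mp (Quotient.eq''.mp this)
    exact hf g _ hspec.1
  obtain ⟨w, hw⟩ := exists_eval_of_li hli (fun i : T => f (hrep i).choose)
  refine ⟨fun x => w.1 (Quotient.mk (orbitRel G X) x),
    fun y => w.2 (Quotient.mk (orbitRel G Y) y),
    fun g x => congrArg w.1 (Quotient.sound (mem_orbit x g)),
    fun g y => congrArg w.2 (Quotient.sound (mem_orbit y g)), ?_⟩
  intro p hp
  have hmem : Quotient.mk (orbitRel G (X × Y)) p ∈ T := ⟨p, hp, rfl⟩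
  have h1 := hw ⟨_, hmem⟩
  have h2 : lfun G (Quotient.mk (orbitRel G (X × Y)) p) w
      = w.1 (Quotient.mk (orbitRel G X) p.1) + w.2 (Quotient.mk (orbitRel G Y) p.2) := rfl
  rw [hwd ⟨_, hmem⟩ p hp rfl, ← h1, h2]

lemma finrank_spanAll [Nonempty X] [Nonempty Y] :
    finrank ℝ (Submodule.span ℝ (Set.range
        (fun ab : Quotient (orbitRel G X) × Quotient (orbitRel G Y) => dfun G ab.1 ab.2))) =
      Nat.card (Quotient (orbitRel G X)) + Nat.card (Quotient (orbitRel G Y)) - 1 := by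
  classical
  have iX : Fintype (Quotient (orbitRel G X)) := Fintype.ofFinite _
  have iY : Fintype (Quotient (orbitRel G Y)) := Fintype.ofFinite _
  have neX : Nonempty (Quotient (orbitRel G X)) := Nonempty.map (Quotient.mk _) ‹_›
  have neY : Nonempty (Quotient (orbitRel G Y)) := Nonempty.map (Quotient.mk _) ‹_›
  set A := Submodule.span ℝ (Set.range
    (fun ab : Quotient (orbitRel G X) × Quotient (orbitRel G Y) => dfun G ab.1 ab.2)) with hA
  set w0 : (Quotient (orbitRel G X) → ℝ) × (Quotient (orbitRel G Y) → ℝ) :=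
    (fun _ => 1, fun _ => -1) with hw0
  obtain ⟨a0⟩ := neX
  obtain ⟨b0⟩ := neY
  have hco : A.dualCoannihilator = Submodule.span ℝ {w0} := by
    apply le_antisymm
    · intro w hw
      rw [Submodule.mem_dualCoannihilator] at hw
      have hall : ∀ a b, w.1 a + w.2 b = 0 := fun a b =>
        hw _ (Submodule.subset_span ⟨(a, b), rfl⟩)
      rw [Submodule.mem_span_singleton]
      refine ⟨w.1 a0, ?_⟩
      have hWX : ∀ a, w.1 a = w.1 a0 := fun a => by
        have h1 := hall a b0; have h2 := hall a0 b0; linarith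
      have hWY : ∀ b, w.2 b = - w.1 a0 := fun b => by
        have h1 := hall a0 b; linarith
      ext i
      · simp [hw0, (hWX i).symm]
      · simp [hw0, hWY i]
    · rw [Submodule.span_le, Set.singleton_subset_iff, SetLike.mem_coe,
        Submodule.mem_dualCoannihilator]
      intro φ hφ
      refine Submodule.span_induction ?_ ?_ ?_ ?_ hφ
      · rintro - ⟨ab, rfl⟩; simp [hw0]
      · simp
      · intro φ ψ _ _ h1 h2; simp [LinearMap.add_apply, h1, h2]
      · intro r φ _ h; simp [h]
  have hw0ne : w0 ≠ 0 := by
    intro h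
    have := congrFun (congrArg Prod.fst h) a0
    norm_num [hw0] at this
  have hmain := Subspace.finrank_add_finrank_dualCoannihilator_eq A
  rw [hco, finrank_span_singleton hw0ne] at hmain
  have hV : finrank ℝ ((Quotient (orbitRel G X) → ℝ) × (Quotient (orbitRel G Y) → ℝ))
      = Fintype.card (Quotient (orbitRel G X)) + Fintype.card (Quotient (orbitRel G Y)) := by
    simp [Module.finrank_prod, Module.finrank_pi]
  rw [hV] at hmain
  have hcX : Nat.card (Quotient (orbitRel G X)) = Fintype.card _ := Nat.card_eq_fintype_card
  have hcY : Nat.card (Quotient (orbitRel G Y)) = Fintype.card _ := Nat.card_eq_fintype_card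
  omega

lemma card_image_le_of_good [Nonempty X] [Nonempty Y] {S : Set (X × Y)} (hG : IsGGood G S) :
    Nat.card ↥(Quotient.mk (orbitRel G (X × Y)) '' S) ≤
      Nat.card (Quotient (orbitRel G X)) + Nat.card (Quotient (orbitRel G Y)) - 1 := by
  classical
  have hli := good_li hG
  set T := (Quotient.mk (orbitRel G (X × Y)) '' S : Set _) with hT
  have : Fintype ↥T := Fintype.ofFinite _
  have h1 : finrank ℝ (Submodule.span ℝ (Set.range fun i : T => lfun G i.1))
      = Fintype.card ↥T := finrank_span_eq_card hli
  have h2 : Submodule.span ℝ (Set.range fun i : T => lfun G i.1) ≤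
      Submodule.span ℝ (Set.range
        (fun ab : Quotient (orbitRel G X) × Quotient (orbitRel G Y) => dfun G ab.1 ab.2)) := by
    rw [Submodule.span_le]
    rintro - ⟨i, rfl⟩
    exact Submodule.subset_span ⟨orbPair G i.1, rfl⟩
  have h3 := Submodule.finrank_mono h2
  rw [h1, finrank_spanAll] at h3
  rwa [Nat.card_eq_fintype_card]

lemma exists_larger [Nonempty X] [Nonempty Y] {S : Set (X × Y)} (hG : IsGGood G S)
    (hcard : Nat.card ↥(Quotient.mk (orbitRel G (X × Y)) '' S) <
      Nat.card (Quotient (orbitRel G X)) + Nat.card (Quotient (orbitRel G Y)) - 1) :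
    ∃ S' : Set (X × Y), IsGGood G S' ∧ S ⊆ S' ∧ S ≠ S' := by
  classical
  have hli := good_li hG
  set T := (Quotient.mk (orbitRel G (X × Y)) '' S : Set _) with hT
  have : Fintype ↥T := Fintype.ofFinite _
  set spanS := Submodule.span ℝ (Set.range fun i : T => lfun G i.1) with hspanS
  have hq : ∃ q, lfun G q ∉ spanS := by
    by_contra h
    push_neg at h
    have hA : Submodule.span ℝ (Set.range
        (fun ab : Quotient (orbitRel G X) × Quotient (orbitRel G Y) => dfun G ab.1 ab.2))
        ≤ spanS := by
      rw [Submodule.span_le]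
      rintro - ⟨ab, rfl⟩
      obtain ⟨x, hx⟩ := Quotient.exists_rep ab.1
      obtain ⟨y, hy⟩ := Quotient.exists_rep ab.2
      have heq : dfun G ab.1 ab.2 = lfun G (Quotient.mk (orbitRel G (X × Y)) (x, y)) := by
        rw [lfun, orbPair_mk, ← hx, ← hy]
      show dfun G ab.1 ab.2 ∈ spanS
      rw [heq]
      exact h _
    have h2 := Submodule.finrank_mono hA
    rw [finrank_spanAll, finrank_span_eq_card hli] at h2
    rw [Nat.card_eq_fintype_card] at hcard
    omega
  obtain ⟨q, hq⟩ := hq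
  have himgrange : lfun G '' T = Set.range fun i : T => lfun G i.1 := Set.image_eq_range _ _
  have hq' : lfun G q ∉ Submodule.span ℝ (lfun G '' T) := by rw [himgrange]; exact hq
  set S' := S ∪ (Quotient.mk (orbitRel G (X × Y)) ⁻¹' {q}) with hS'
  have hinv' : ∀ (g : G), ∀ p ∈ S', g • p ∈ S' := by
    rintro g p (hp | hp)
    · exact Or.inl (hG.1 g p hp)
    · refine Or.inr ?_
      simp only [Set.mem_preimage, Set.mem_singleton_iff] at hp ⊢
      rw [Quotient.sound (mem_orbit p g), hp]
  have hpre : Quotient.mk (orbitRel G (X × Y)) ''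
      (Quotient.mk (orbitRel G (X × Y)) ⁻¹' {q}) = {q} :=
    Set.image_preimage_eq_of_subset (fun x _ => ⟨Quotient.out x, Quotient.out_eq x⟩)
  have himg : Quotient.mk (orbitRel G (X × Y)) '' S' = insert q T := by
    rw [hS', Set.image_union, hpre, ← hT, Set.union_singleton]
  have hinj : Set.InjOn (lfun G) T := by
    intro i hi j hj hij
    have := hli.injective (a₁ := ⟨i, hi⟩) (a₂ := ⟨j, hj⟩) hij
    exact congrArg Subtype.val this
  replace hli := (linearIndepOn_iff_image hinj).mp hli
  have hnotmem : lfun G q ∉ lfun G '' T := fun hmem => hq' (Submodule.subset_span hmem)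
  have hins := LinearIndepOn.id_insert (s := lfun G '' T) (x := lfun G q) hli hq'
  have hinj2 : Set.InjOn (lfun G) (insert q T) := by
    intro i hi j hj hij
    rcases hi with rfl | hi
    · rcases hj with rfl | hj
      · rfl
      · exact absurd (show lfun G i ∈ lfun G '' T from hij ▸ Set.mem_image_of_mem _ hj) hnotmem
    · rcases hj with rfl | hj
      · exact absurd (show lfun G j ∈ lfun G '' T from hij ▸ Set.mem_image_of_mem _ hi) hnotmem
      · exact hinj hi hj hij
  have hli2 : LinearIndependent ℝ
      (fun i : ↥(Quotient.mk (orbitRel G (X × Y)) '' S') => lfun G i.1) := by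
    rw [himg]
    show LinearIndepOn ℝ (lfun G) (insert q T)
    rw [linearIndepOn_iff_image hinj2, Set.image_insert_eq]
    exact hins
  refine ⟨S', li_good hinv' hli2, Set.subset_union_left, fun hEq => ?_⟩
  have hout : Quotient.out q ∈ S' := Or.inr (Quotient.out_eq q)
  rw [← hEq] at hout
  have : q ∈ T := hT ▸ ⟨_, hout, Quotient.out_eq q⟩
  exact hq' (Submodule.subset_span (Set.mem_image_of_mem _ this))


lemma card_image_of_maximal [Nonempty X] [Nonempty Y] {S : Set (X × Y)} (hG : IsGGood G S)
    (hmax : ∀ T : Set (X × Y), IsGGood G T → S ⊆ T → S = T) :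
    Nat.card ↥(Quotient.mk (orbitRel G (X × Y)) '' S) =
      Nat.card (Quotient (orbitRel G X)) + Nat.card (Quotient (orbitRel G Y)) - 1 := by
  refine le_antisymm (card_image_le_of_good hG) ?_
  by_contra h
  push_neg at h
  obtain ⟨S', hS', hsub, hne⟩ := exists_larger hG h
  exact hne (hmax S' hS' hsub)

end Main

theorem stmt_15 {G X Y : Type*} [Group G] [Finite G] [Finite X] [Finite Y]
    [MulAction G X] [MulAction G Y] [Nonempty X] [Nonempty Y] :
    {S : Set (X × Y) | IsGGood G S ∧
        ∀ T : Set (X × Y), IsGGood G T → S ⊆ T → S = T}.ncard ≤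
      (Nat.card (Quotient (MulAction.orbitRel G (X × Y)))).choose
        (Nat.card (Quotient (MulAction.orbitRel G X)) +
          Nat.card (Quotient (MulAction.orbitRel G Y)) - 1) := by
  classical
  have iQ : Fintype (Quotient (orbitRel G (X × Y))) := Fintype.ofFinite _
  set k := Nat.card (Quotient (orbitRel G X)) + Nat.card (Quotient (orbitRel G Y)) - 1 with hk
  refine le_trans (Set.ncard_le_ncard_of_injOn
    (s := {S : Set (X × Y) | IsGGood G S ∧
        ∀ T : Set (X × Y), IsGGood G T → S ⊆ T → S = T})
    (t := {A : Finset (Quotient (orbitRel G (X × Y))) | A.card = k})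
    (fun S : Set (X × Y) => (Set.toFinite (Quotient.mk (orbitRel G (X × Y)) '' S)).toFinset)
    ?hmap ?hinj (Set.toFinite _)) ?hfinal
  case hfinal =>
    have hset : {A : Finset (Quotient (orbitRel G (X × Y))) | A.card = k}
        = (↑(Finset.powersetCard k
            (Finset.univ : Finset (Quotient (orbitRel G (X × Y))))) :
          Set (Finset (Quotient (orbitRel G (X × Y))))) := by
      ext A
      simp [Finset.mem_powersetCard]
    rw [hset, Set.ncard_coe_finset, Finset.card_powersetCard, Finset.card_univ,
      Nat.card_eq_fintype_card]
  case hmap =>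
    rintro S ⟨hG1, hmax⟩
    have := card_image_of_maximal hG1 hmax
    simp only [Set.mem_setOf_eq]
    rw [← Set.ncard_eq_toFinset_card _ (Set.toFinite _), ← Nat.card_coe_set_eq, this]
  case hinj =>
    rintro S1 ⟨h1, _⟩ S2 ⟨h2, _⟩ heq
    have himg : Quotient.mk (orbitRel G (X × Y)) '' S1
        = Quotient.mk (orbitRel G (X × Y)) '' S2 := by
      rwa [Set.Finite.toFinset_inj] at heq
    rw [invariant_eq_preimage h1.1, invariant_eq_preimage h2.1, himg]
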